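/- Let λ > 0 and π_λ be the Poisson distribution on ℕ, π_λ(n) = e^{−λ} λⁿ/n!. For every k ∈ ℕ, with f_k(n) := e^{kn}, one has Ent_{π_λ}(f_k) = (kλe^k − λe^k + λ)·e^{λ(e^k−1)} and λ·∑_n π_λ(n)(f_k(n+1) − f_k(n))(log f_k(n+1) − log f_k(n)) = λk(e^k − 1)·e^{λ(e^k−1)}. -/

import Mathlib

lemma tsum_exp_aux (x : ℝ) : ∑' n : ℕ, x ^ n / n.factorial = Real.exp x := by
  rw [Real.exp_eq_exp_ℝ, NormedSpace.exp_eq_tsum_div]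

lemma summable_exp_aux (x : ℝ) : Summable (fun n : ℕ => x ^ n / n.factorial) :=
  Real.summable_pow_div_factorial x

lemma summable_n_exp_aux (x : ℝ) :
    Summable (fun n : ℕ => (n : ℝ) * x ^ n / n.factorial) := by
  rw [← summable_nat_add_iff 1]
  have : (fun n : ℕ => ((n + 1 : ℕ) : ℝ) * x ^ (n + 1) / (n + 1).factorial)
      = fun n : ℕ => x * (x ^ n / n.factorial) := by
    funext n
    rw [Nat.factorial_succ]
    push_cast
    field_simp
    ring
  rw [this]
  exact (summable_exp_aux x).mul_left x

lemma tsum_n_exp_aux (x : ℝ) :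
    ∑' n : ℕ, (n : ℝ) * x ^ n / n.factorial = x * Real.exp x := by
  rw [Summable.tsum_eq_zero_add (summable_n_exp_aux x)]
  simp only [Nat.cast_zero, zero_mul, zero_div, zero_add]
  have : (fun n : ℕ => ((n + 1 : ℕ) : ℝ) * x ^ (n + 1) / (n + 1).factorial)
      = fun n : ℕ => x * (x ^ n / n.factorial) := by
    funext n
    rw [Nat.factorial_succ]
    push_cast
    field_simp
    ring
  calc ∑' n : ℕ, ((n + 1 : ℕ) : ℝ) * x ^ (n + 1) / (n + 1).factorial
      = ∑' n : ℕ, x * (x ^ n / n.factorial) := by rw [this]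
    _ = x * Real.exp x := by rw [tsum_mul_left, tsum_exp_aux]

theorem stmt_9 (lam : ℝ) (hlam : 0 < lam)
    (π : ℕ → ℝ) (hπ : ∀ n, π n = Real.exp (-lam) * lam ^ n / n.factorial)
    (k : ℕ) (f : ℕ → ℝ) (hf : ∀ n, f n = Real.exp (k * n)) :
    ((∑' n, π n * f n * Real.log (f n))
        - (∑' n, π n * f n) * Real.log (∑' n, π n * f n))
      = (k * lam * Real.exp k - lam * Real.exp k + lam)
          * Real.exp (lam * (Real.exp k - 1))
    ∧ lam * ∑' n, π n * (f (n + 1) - f n) * (Real.log (f (n + 1)) - Real.log (f n))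
      = lam * k * (Real.exp k - 1) * Real.exp (lam * (Real.exp k - 1)) := by
  set x : ℝ := lam * Real.exp k with hx
  have hπf : ∀ n, π n * f n = Real.exp (-lam) * (x ^ n / n.factorial) := by
    intro n
    rw [hπ, hf, mul_comm (k:ℝ) (n:ℝ), Real.exp_nat_mul, hx, mul_pow]
    field_simp
  have hsum1 : (∑' n, π n * f n) = Real.exp (lam * (Real.exp k - 1)) := by
    simp only [hπf]
    rw [tsum_mul_left, tsum_exp_aux]
    rw [← Real.exp_add]
    ring_nf
    rw [hx]
  have hlog : ∀ n : ℕ, Real.log (f n) = (k : ℝ) * n := by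
    intro n; rw [hf, Real.log_exp]
  have hsum2 : (∑' n, π n * f n * Real.log (f n))
      = (k : ℝ) * x * Real.exp (lam * (Real.exp k - 1)) := by
    have : ∀ n : ℕ, π n * f n * Real.log (f n)
        = ((k : ℝ) * Real.exp (-lam)) * ((n : ℝ) * x ^ n / n.factorial) := by
      intro n
      rw [hπf, hlog]
      ring
    simp only [this]
    rw [tsum_mul_left, tsum_n_exp_aux,
      show lam * (Real.exp (k:ℝ) - 1) = -lam + x from by rw [hx]; ring, Real.exp_add]
    ring
  constructor
  · rw [hsum1, hsum2, Real.log_exp]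
    ring
  · have h2 : ∀ n : ℕ, π n * (f (n + 1) - f n) * (Real.log (f (n + 1)) - Real.log (f n))
        = ((k : ℝ) * (Real.exp k - 1)) * (π n * f n) := by
      intro n
      have hfs : f (n + 1) = Real.exp k * f n := by
        rw [hf, hf]
        rw [← Real.exp_add]
        congr 1
        push_cast
        ring
      rw [hlog, hlog, hfs]
      push_cast
      ring
    simp only [h2]
    rw [tsum_mul_left, hsum1]
    ring
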